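/- arXiv:1504.07939 — 2 statements merged into one kernel-verified Lean document; each statement's English description precedes it below -/
import Mathlib

section
/- Assume that for all x, y ≥ 2 we have π(x + y) ≤ π(x) + π(y). Then for all a, b ≥ 2, the n-th primes satisfy p_{a+b} ≥ p_a + p_b. -/
open Nat

lemma pc_nth (n : ℕ) : Nat.primeCounting (Nat.nth Nat.Prime n) = n + 1 := by
  rw [Nat.primeCounting, Nat.primeCounting', Nat.count_succ]
  have hp : Nat.Prime (Nat.nth Nat.Prime n) := Nat.prime_nth_prime n
  simp [hp]
  exact Nat.count_nth_of_infinite Nat.infinite_setOf_prime n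

theorem stmt7
    (h : ∀ x y : ℕ, 2 ≤ x → 2 ≤ y →
      Nat.primeCounting (x + y) ≤ Nat.primeCounting x + Nat.primeCounting y) :
    ∀ a b : ℕ, 2 ≤ a → 2 ≤ b →
      Nat.nth Nat.Prime (a + b - 1) ≥ Nat.nth Nat.Prime (a - 1) + Nat.nth Nat.Prime (b - 1) := by
  intro a b ha hb
  set A := Nat.nth Nat.Prime (a - 1) with hA
  set B := Nat.nth Nat.Prime (b - 1) with hB
  set C := Nat.nth Nat.Prime (a + b - 1) with hC
  by_contra hcon
  push_neg at hcon
  -- C < A + B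
  have hsm : StrictMono (Nat.nth Nat.Prime) := Nat.nth_strictMono Nat.infinite_setOf_prime
  have hAC : A < C := hsm (by omega)
  have hAodd : Odd A := (Nat.prime_nth_prime _).odd_of_ne_two (by
    have := hsm (show (0:ℕ) < a - 1 by omega)
    rw [Nat.nth_prime_zero_eq_two] at this
    omega)
  have hCodd : Odd C := (Nat.prime_nth_prime _).odd_of_ne_two (by
    have := hsm (show (0:ℕ) < a + b - 1 by omega)
    rw [Nat.nth_prime_zero_eq_two] at this
    omega)
  have hy2 : 2 ≤ C - A := by
    rcases hAodd with ⟨k, hk⟩; rcases hCodd with ⟨m, hm⟩; omega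
  have hA2 : 2 ≤ A := Nat.Prime.two_le (Nat.prime_nth_prime _)
  have key := h A (C - A) hA2 hy2
  rw [show A + (C - A) = C by omega] at key
  have hpcC : Nat.primeCounting C = a + b := by
    rw [hC, pc_nth]; omega
  have hpcA : Nat.primeCounting A = a := by
    rw [hA, pc_nth]; omega
  -- π(C - A) ≤ b - 1
  have hlt : C - A ≤ B - 1 := by omega
  have hpcy : Nat.primeCounting (C - A) ≤ b - 1 := by
    calc Nat.primeCounting (C - A) ≤ Nat.primeCounting (B - 1) :=
          Nat.monotone_primeCounting hlt
      _ = Nat.primeCounting' B := by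
          rw [Nat.primeCounting, Nat.primeCounting']
          congr 1
          have hB2 : 2 ≤ B := Nat.Prime.two_le (Nat.prime_nth_prime _)
          omega
      _ = b - 1 := by rw [hB, Nat.primeCounting'_nth_eq]
  omega
end

section
/- Assume that for all x, y ≥ 2 we have π(x + y) ≤ π(x) + π(y), and moreover that for every prime p and every x with 2 ≤ x ≤ p - 2, π(p - 1) ≠ π(x) + π(p - x). Then for all a, b ≥ 2, p_{a+b} > p_a + p_b. -/
open Nat

theorem stmt8
    (h : ∀ x y : ℕ, 2 ≤ x → 2 ≤ y →
      Nat.primeCounting (x + y) ≤ Nat.primeCounting x + Nat.primeCounting y)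
    (h2 : ∀ p x : ℕ, p.Prime → 2 ≤ x → x ≤ p - 2 →
      Nat.primeCounting (p - 1) ≠ Nat.primeCounting x + Nat.primeCounting (p - x)) :
    ∀ a b : ℕ, 2 ≤ a → 2 ≤ b →
      Nat.nth Nat.Prime (a + b - 1) > Nat.nth Nat.Prime (a - 1) + Nat.nth Nat.Prime (b - 1) := by
  intro a b ha hb
  set p := Nat.nth Nat.Prime (a + b - 1) with hp
  set x := Nat.nth Nat.Prime (a - 1) with hx
  set y := Nat.nth Nat.Prime (b - 1) with hy
  by_contra hle
  push_neg at hle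
  -- x, y, p are odd primes
  have hmono := Nat.nth_strictMono (p := Nat.Prime) Nat.infinite_setOf_prime
  have hx2 : 2 < x := by
    have := hmono (show 0 < a - 1 by omega)
    simpa [Nat.nth_prime_zero_eq_two] using this
  have hy2 : 2 < y := by
    have := hmono (show 0 < b - 1 by omega)
    simpa [Nat.nth_prime_zero_eq_two] using this
  have hxp : x < p := hmono (by omega)
  have hxprime : Nat.Prime x := Nat.prime_nth_prime _
  have hyprime : Nat.Prime y := Nat.prime_nth_prime _
  have hpprime : Nat.Prime p := Nat.prime_nth_prime _
  have hxodd : x % 2 = 1 := by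
    rcases hxprime.eq_two_or_odd with h' | h' <;> omega
  have hyodd : y % 2 = 1 := by
    rcases hyprime.eq_two_or_odd with h' | h' <;> omega
  have hpodd : p % 2 = 1 := by
    have : 2 < p := lt_trans hx2 hxp
    rcases hpprime.eq_two_or_odd with h' | h' <;> omega
  -- π values
  have hπp : Nat.primeCounting p = a + b := by
    rw [hp, pc_nth]; omega
  have hπx : Nat.primeCounting x = a := by
    rw [hx, pc_nth]; omega
  -- apply h with x and p - x
  have hpx2 : 2 ≤ p - x := by omega
  have hsplit : Nat.primeCounting p ≤ Nat.primeCounting x + Nat.primeCounting (p - x) := by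
    have := h x (p - x) (by omega) hpx2
    rwa [Nat.add_sub_cancel' (le_of_lt hxp)] at this
  have hπpx : b ≤ Nat.primeCounting (p - x) := by omega
  -- hence y = nth (b-1) ≤ p - x
  have hylep : y < p - x + 1 := by
    apply Nat.nth_lt_of_lt_count
    rw [Nat.primeCounting, Nat.primeCounting'] at hπpx
    omega
  -- so p ≥ x + y, combined with hle: p = x + y, contradicting parity
  omega
end
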